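/- Let R be a strongly F-regular F-finite domain of prime characteristic p > 0. Then there exists ε > 0 such that for all e ≥ 1, a_e(R) ≥ ε·rank(F^e_*R), where rank(F^e_*R) denotes the generic rank of the finitely generated R-module F^e_*R (i.e., its dimension after tensoring with the fraction field of R). -/

import Mathlib

noncomputable section

open CategoryTheory Filter
open scoped Classical

universe u v

/-- The `R`-module `F^e_* M`: the module `M` with scalars acting through the `e`-th iterate
of the Frobenius endomorphism of `R`. -/
def FStar (R : Type u) [CommSemiring R] (p : ℕ) [ExpChar R p] (e : ℕ) (M : Type v) : Type v := M

instance FStar.instAddCommGroup (R : Type u) [CommSemiring R] (p : ℕ) [ExpChar R p] (e : ℕ)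
    (M : Type v) [AddCommGroup M] : AddCommGroup (FStar R p e M) := ‹AddCommGroup M›

instance FStar.instModule (R : Type u) [CommSemiring R] (p : ℕ) [ExpChar R p] (e : ℕ)
    (M : Type v) [AddCommGroup M] [Module R M] : Module R (FStar R p e M) :=
  Module.compHom M (iterateFrobenius R p e)

/-- The identity of `M`, viewed as a map `M → F^e_* M`. -/
def FStar.mk (R : Type u) [CommSemiring R] (p : ℕ) [ExpChar R p] (e : ℕ) {M : Type v}
    (m : M) : FStar R p e M := m

theorem charP_of_ringHom {R : Type u} [CommRing R] (p : ℕ) [Fact p.Prime] [CharP R p]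
    (S : Type v) [CommRing S] [Nontrivial S] (f : R →+* S) : CharP S p :=
  (CharP.charP_iff_prime_eq_zero Fact.out).2 (by
    rw [← map_natCast f p, CharP.cast_eq_zero, map_zero])

instance instCharPLocalizationAtPrime (R : Type u) [CommRing R] (p : ℕ) [Fact p.Prime]
    [CharP R p] (P : Ideal R) [P.IsPrime] : CharP (Localization.AtPrime P) p :=
  charP_of_ringHom p _ (algebraMap R (Localization.AtPrime P))

instance instCharPResidueField (R : Type u) [CommRing R] (p : ℕ) [Fact p.Prime] [CharP R p]
    [IsLocalRing R] : CharP (IsLocalRing.ResidueField R) p :=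
  charP_of_ringHom p _ (IsLocalRing.residue R)

/-- `R` is F-finite: it is a finitely generated module over itself via Frobenius. -/
def FFinite (R : Type u) [CommRing R] (p : ℕ) [Fact p.Prime] [CharP R p] : Prop :=
  Module.Finite R (FStar R p 1 R)

/-- The maximal rank of a free direct summand of `M`, equivalently the maximal rank of a
finite free module admitting a surjective `R`-linear map from `M`. -/
noncomputable def frk (R : Type u) [CommRing R] (M : Type v) [AddCommGroup M]
    [Module R M] : ℕ :=
  sSup {n | ∃ f : M →ₗ[R] (Fin n → R), Function.Surjective f}

/-- The splitting rate `sr(M)`: `-1` if no `F^e_* M` (`e ≥ 1`) has a nonzero free summand,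
and otherwise the largest `ℓ ≥ 0` such that `liminf_e a_e(M)/p^{eℓ} > 0`. -/
noncomputable def srM (R : Type u) [CommRing R] (p : ℕ) [Fact p.Prime] [CharP R p]
    (M : Type v) [AddCommGroup M] [Module R M] : ℤ :=
  if ∀ e : ℕ, 1 ≤ e → frk R (FStar R p e M) = 0 then -1
  else (sSup {ℓ : ℕ |
    0 < atTop.liminf fun e : ℕ => (frk R (FStar R p e M) : ℝ) / (p : ℝ) ^ (e * ℓ)} : ℕ)

/-- `R` is F-pure (equivalently, F-split): the Frobenius map `R → F_* R` splits. -/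
def FPure (R : Type u) [CommRing R] (p : ℕ) [Fact p.Prime] [CharP R p] : Prop :=
  ∃ g : FStar R p 1 R →ₗ[R] R,
    g.comp (LinearMap.toSpanSingleton R (FStar R p 1 R) (FStar.mk R p 1 (1 : R))) =
      LinearMap.id

/-- The `e`-th splitting set `I_e = {r ∈ R ∣ (R → F^e_* R, 1 ↦ F^e_* r)` is not split`}`. -/
def splitSet (R : Type u) [CommRing R] (p : ℕ) [Fact p.Prime] [CharP R p] (e : ℕ) : Set R :=
  {r | ¬ ∃ g : FStar R p e R →ₗ[R] R,
    g.comp (LinearMap.toSpanSingleton R (FStar R p e R) (FStar.mk R p e r)) = LinearMap.id}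

/-- The splitting prime `𝒫 = ∩_{e ≥ 1} I_e` of a local ring, as a subset of `R`. -/
def splittingPrimeSet (R : Type u) [CommRing R] (p : ℕ) [Fact p.Prime] [CharP R p] : Set R :=
  ⋂ e ∈ {e : ℕ | 1 ≤ e}, splitSet R p e

/-- The F-split locus of the module `M`. -/
def fsl (R : Type u) [CommRing R] (p : ℕ) [Fact p.Prime] [CharP R p]
    (M : Type u) [AddCommGroup M] [Module R M] : Set (PrimeSpectrum R) :=
  {P | ∃ e : ℕ, 0 < e ∧ 0 < frk (Localization.AtPrime P.asIdeal)
    (FStar (Localization.AtPrime P.asIdeal) p e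
      (LocalizedModule P.asIdeal.primeCompl M))}

/-- `R` is strongly F-regular. -/
def StronglyFRegular (R : Type u) [CommRing R] (p : ℕ) [Fact p.Prime] [CharP R p] : Prop :=
  ∀ c : R, c ≠ 0 → ∃ e : ℕ, 1 ≤ e ∧
    ∃ φ : FStar R p e R →ₗ[R] R, φ (FStar.mk R p e c) = 1

/- ===== auxiliary infrastructure for Statement 19 ===== -/

section Infra
variable (R : Type u) [CommRing R] (p : ℕ) [Fact p.Prime] [CharP R p]

lemma fstar_smul (e : ℕ) (r : R) (x : FStar R p e R) :
    (r • x : FStar R p e R) = (@HMul.hMul R R R _ (r ^ p ^ e) x) := by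
  show @HMul.hMul R R R _ (iterateFrobenius R p e r) x = _
  rw [iterateFrobenius_def]

/-- restriction of an `R`-linear map `F^a_* R → R` to a map `F^(b+a)_* R → F^b_* R`. -/
def shiftMap (a b : ℕ) (f : FStar R p a R →ₗ[R] R) :
    FStar R p (b + a) R →ₗ[R] FStar R p b R where
  toFun x := f x
  map_add' x y := f.map_add x y
  map_smul' r x := by
    have h1 : (r • x : FStar R p (b + a) R)
        = ((r ^ p ^ b) • (show FStar R p a R from x) : FStar R p a R) := by
      rw [fstar_smul, fstar_smul, ← pow_mul, ← pow_add]
    show f (r • x : FStar R p (b+a) R) = (r • (show FStar R p b R from f x) : FStar R p b R)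
    rw [h1, f.map_smul, fstar_smul]
    rfl

end Infra

section Infra2
variable (R : Type u) [CommRing R] (p : ℕ) [Fact p.Prime] [CharP R p]

/-- Inverse of `FStar.mk`. -/
def fsOut {e : ℕ} {M : Type v} (x : FStar R p e M) : M := x

/-- The iterated Frobenius as a map `F^a_* R → F^b_* R` for `a ≤ b`. -/
def frobMap (a b : ℕ) (h : a ≤ b) : FStar R p a R →ₗ[R] FStar R p b R where
  toFun x := FStar.mk R p b ((fsOut R p x) ^ p ^ (b - a))
  map_add' x y := by
    show (fsOut R p x + fsOut R p y) ^ p ^ (b - a) = (fsOut R p x) ^ p ^ (b-a) + (fsOut R p y) ^ p ^ (b-a)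
    exact add_pow_char_pow ..
  map_smul' r x := by
    show FStar.mk R p b ((fsOut R p (r • x)) ^ p ^ (b-a)) = (r • (FStar.mk R p b ((fsOut R p x) ^ p ^ (b-a))) : FStar R p b R)
    have : fsOut R p (r • x) = r ^ p ^ a * fsOut R p x := fstar_smul R p a r (fsOut R p x)
    rw [this]
    show (r ^ p ^ a * fsOut R p x) ^ p ^ (b-a) = (r • (show FStar R p b R from (fsOut R p x) ^ p ^ (b-a)) : FStar R p b R)
    rw [fstar_smul, mul_pow, ← pow_mul, ← pow_add, Nat.add_sub_cancel' h]

lemma frobMap_apply (a b : ℕ) (h : a ≤ b) (x : R) :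
    frobMap R p a b h (FStar.mk R p a x) = FStar.mk R p b (x ^ p ^ (b - a)) := by
  with_unfolding_all rfl

/-- splittings compose -/
lemma split_comp {a b : ℕ} (f : FStar R p a R →ₗ[R] R) (hf : f (FStar.mk R p a 1) = 1)
    (g : FStar R p b R →ₗ[R] R) (hg : g (FStar.mk R p b 1) = 1) :
    ∃ h : FStar R p (b + a) R →ₗ[R] R, h (FStar.mk R p (b+a) 1) = 1 := by
  refine ⟨g.comp (shiftMap R p a b f), ?_⟩
  show g (f (FStar.mk R p a 1)) = 1
  rw [hf]; exact hg

/-- from one splitting, splittings at all levels -/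
lemma split_all {e₁ : ℕ} (he₁ : 1 ≤ e₁) (φ : FStar R p e₁ R →ₗ[R] R)
    (hφ : φ (FStar.mk R p e₁ 1) = 1)
    (E : ℕ) (hE : 1 ≤ E) : ∃ ψ : FStar R p E R →ₗ[R] R, ψ (FStar.mk R p E 1) = 1 := by
  have key : ∀ n : ℕ, 1 ≤ n → ∃ m : ℕ, n ≤ m ∧
      ∃ ψ : FStar R p m R →ₗ[R] R, ψ (FStar.mk R p m 1) = 1 := by
    intro n hn
    induction n, hn using Nat.le_induction with
    | base => exact ⟨e₁, he₁, φ, hφ⟩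
    | succ n hn ih =>
      obtain ⟨m, hm, ψ, hψ⟩ := ih
      obtain ⟨h, hh⟩ := split_comp R p ψ hψ φ hφ
      exact ⟨e₁ + m, by omega, h, hh⟩
  obtain ⟨m, hm, ψ, hψ⟩ := key E hE
  refine ⟨ψ.comp (frobMap R p E m hm), ?_⟩
  show ψ (frobMap R p E m hm (FStar.mk R p E 1)) = 1
  rw [frobMap_apply, one_pow, hψ]

end Infra2

section Infra3
variable (R : Type u) [CommRing R] (p : ℕ) [Fact p.Prime] [CharP R p]

/-- `F^e_* R` is module-finite when `R` is F-finite. -/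
lemma fstar_finite (hFF : FFinite R p) (e : ℕ) : Module.Finite R (FStar R p e R) := by
  induction e with
  | zero =>
    let F : R →ₗ[R] FStar R p 0 R :=
      { toFun := fun x => FStar.mk R p 0 x
        map_add' := fun _ _ => rfl
        map_smul' := fun r x => by
          show FStar.mk R p 0 (r * x) = (r • (FStar.mk R p 0 x) : FStar R p 0 R)
          rw [fstar_smul R p 0, pow_zero, pow_one]
          with_unfolding_all rfl }
    exact Module.Finite.of_surjective F (fun y => ⟨fsOut R p y, rfl⟩)
  | succ e ih =>
    letI : Module.Finite R (FStar R p 1 R) := hFF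
    letI : Module.Finite R (FStar R p e R) := ih
    obtain ⟨k, f1, hf1⟩ := Module.Finite.exists_fin' R (FStar R p 1 R)
    let F : (Fin k → FStar R p e R) →ₗ[R] FStar R p (e+1) R :=
      { toFun := fun v => FStar.mk R p (e+1) (fsOut R p (f1 (fun i => fsOut R p (v i))))
        map_add' := fun v w => by
          show FStar.mk R p (e+1) (fsOut R p (f1 (fun i => fsOut R p (v i) + fsOut R p (w i)))) = _
          rw [show (fun i => fsOut R p (v i) + fsOut R p (w i))
              = (fun i => fsOut R p (v i)) + (fun i => fsOut R p (w i)) from rfl, map_add]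
          rfl
        map_smul' := fun r v => by
          have h1 : (fun i => fsOut R p ((r • v) i))
              = (r ^ p ^ e) • (fun i => fsOut R p (v i)) := by
            funext i
            show fsOut R p (r • (v i) : FStar R p e R) = r ^ p ^ e * fsOut R p (v i)
            exact fstar_smul R p e r (fsOut R p (v i))
          show FStar.mk R p (e+1) (fsOut R p (f1 (fun i => fsOut R p ((r • v) i))))
            = (r • (FStar.mk R p (e+1) (fsOut R p (f1 (fun i => fsOut R p (v i))))) : FStar R p (e+1) R)
          rw [h1, map_smul, fstar_smul R p (e+1)]
          show (r ^ p ^ e) ^ p ^ 1 * (fsOut R p (f1 (fun i => fsOut R p (v i))))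
            = r ^ p ^ (e+1) * fsOut R p (f1 (fun i => fsOut R p (v i)))
          rw [← pow_mul, pow_one, ← pow_succ] }
    have hF : Function.Surjective F := by
      intro y
      obtain ⟨v, hv⟩ := hf1 y
      exact ⟨v, congrArg (FStar.mk R p (e+1)) (congrArg (fsOut R p) hv)⟩
    exact Module.Finite.of_surjective F hF

variable [IsDomain R]

/-- the set defining `frk` is bounded above for finite modules -/
lemma frk_bddAbove (M : Type u) [AddCommGroup M] [Module R M] [Module.Finite R M] :
    BddAbove {n : ℕ | ∃ f : M →ₗ[R] (Fin n → R), Function.Surjective f} := by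
  obtain ⟨k, g, hg⟩ := Module.Finite.exists_fin' R M
  refine ⟨k, fun n hn => ?_⟩
  obtain ⟨f, hf⟩ := hn
  exact le_of_fin_surjective R (f.comp g) (hf.comp hg)

lemma frk_ge (M : Type u) [AddCommGroup M] [Module R M] [Module.Finite R M] (n : ℕ)
    (f : M →ₗ[R] (Fin n → R)) (hf : Function.Surjective f) : n ≤ frk R M :=
  le_csSup (frk_bddAbove R M) ⟨f, hf⟩

end Infra3

section Main
variable (R : Type u) [CommRing R] (p : ℕ) [Fact p.Prime] [CharP R p]

/-- The identity `F^0_* R ≃ R` as a linear map. -/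
def fstarZero : FStar R p 0 R →ₗ[R] R where
  toFun x := fsOut R p x
  map_add' _ _ := rfl
  map_smul' r x := by
    show fsOut R p (r • x : FStar R p 0 R) = r * fsOut R p x
    rw [fstar_smul R p 0, pow_zero, pow_one]
    rfl

/-- The key uniform inductive construction: from level-one "generic freeness" data with
uniform denominator `d`, similar data at every level `e`, with the same `d`. -/
lemma key_induction (d : R) (m : ℕ) (u : Fin m → R)
    (ρ : Fin m → (FStar R p 1 R →ₗ[R] R))
    (hB1 : ∀ x : R, ∑ l, (ρ l (FStar.mk R p 1 x)) ^ p * u l = d ^ (p - 1) * x)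
    (hB2 : ∀ k l, ρ k (FStar.mk R p 1 (d * u l)) = if k = l then d else 0) (e : ℕ) :
    ∃ (g : Fin (m ^ e) → R) (π : Fin (m ^ e) → (FStar R p e R →ₗ[R] R)),
      (∀ x : R, ∑ j, (π j (FStar.mk R p e x)) ^ p ^ e * g j = d ^ (p ^ e - 1) * x) ∧
      (∀ i j, π i (FStar.mk R p e (d * g j)) = if i = j then d else 0) := by
  have hp2 : 2 ≤ p := (Fact.out : p.Prime).two_le
  induction e with
  | zero =>
    refine ⟨fun _ => 1, fun _ => fstarZero R p, ?_, ?_⟩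
    · intro x
      show ∑ _j : Fin (m ^ 0), (fstarZero R p (FStar.mk R p 0 x)) ^ p ^ 0 * 1 = d ^ (p ^ 0 - 1) * x
      rw [Finset.sum_const, Finset.card_univ, Fintype.card_fin, pow_zero, pow_zero, pow_one,
        mul_one, one_smul, Nat.sub_self, pow_zero, one_mul]
      rfl
    · intro i j
      have hij : i = j := by
        have h1 : (i : ℕ) < 1 := by have := i.isLt; simpa using this
        have h2 : (j : ℕ) < 1 := by have := j.isLt; simpa using this
        exact Fin.ext (by omega)
      subst hij
      rw [if_pos rfl]
      have : fstarZero R p (FStar.mk R p 0 (d * 1)) = d * 1 := rfl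
      rw [this, mul_one]
  | succ e ih =>
    obtain ⟨g, π, hA1, hA2⟩ := ih
    let σ : Fin (m ^ (e+1)) ≃ Fin (m ^ e) × Fin m :=
      (finCongr (pow_succ m e)).trans finProdFinEquiv.symm
    refine ⟨fun J => (g (σ J).1) ^ p * u (σ J).2,
      fun J => (π (σ J).1).comp (shiftMap R p 1 e (ρ (σ J).2)), ?_, ?_⟩
    · intro x
      -- individual summand rewriting
      have summand : ∀ J : Fin (m ^ (e+1)),
          ((π (σ J).1).comp (shiftMap R p 1 e (ρ (σ J).2)) (FStar.mk R p (e+1) x)) ^ p ^ (e+1)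
            * ((g (σ J).1) ^ p * u (σ J).2)
          = ((π (σ J).1 (FStar.mk R p e (ρ (σ J).2 (FStar.mk R p 1 x)))) ^ p ^ e
              * g (σ J).1) ^ p * u (σ J).2 := by
        intro J
        have : (π (σ J).1).comp (shiftMap R p 1 e (ρ (σ J).2)) (FStar.mk R p (e+1) x)
            = π (σ J).1 (FStar.mk R p e (ρ (σ J).2 (FStar.mk R p 1 x))) := rfl
        rw [this, mul_pow, ← pow_mul, ← pow_succ, mul_assoc]
      rw [Finset.sum_congr rfl (fun J _ => summand J)]
      rw [← Equiv.sum_comp σ.symm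
        (fun J => ((π (σ J).1 (FStar.mk R p e (ρ (σ J).2 (FStar.mk R p 1 x)))) ^ p ^ e
              * g (σ J).1) ^ p * u (σ J).2)]
      simp only [Equiv.apply_symm_apply]
      rw [Fintype.sum_prod_type_right]
      -- now a sum over l of (sum over j) — regroup
      have inner : ∀ l : Fin m,
          (∑ j : Fin (m ^ e), ((π j (FStar.mk R p e (ρ l (FStar.mk R p 1 x)))) ^ p ^ e
              * g j) ^ p * u l)
          = (d ^ (p ^ e - 1) * (ρ l (FStar.mk R p 1 x))) ^ p * u l := by
        intro l
        rw [← Finset.sum_mul, ← sum_pow_char, hA1]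
      rw [Finset.sum_congr rfl (fun l _ => inner l)]
      have expand : ∀ l : Fin m,
          (d ^ (p ^ e - 1) * (ρ l (FStar.mk R p 1 x))) ^ p * u l
          = d ^ ((p ^ e - 1) * p) * ((ρ l (FStar.mk R p 1 x)) ^ p * u l) := by
        intro l
        rw [mul_pow, ← pow_mul, mul_assoc]
      rw [Finset.sum_congr rfl (fun l _ => expand l), ← Finset.mul_sum, hB1, ← mul_assoc,
        ← pow_add]
      have hq : 1 ≤ p ^ e := Nat.one_le_pow _ _ (by omega)
      have hle : p ≤ p ^ e * p := Nat.le_mul_of_pos_left _ (by omega)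
      have hexp : (p ^ e - 1) * p + (p - 1) = p ^ (e + 1) - 1 := by
        rw [Nat.sub_mul, one_mul, pow_succ]
        omega
      rw [hexp]
    · intro I J
      have hcomp : (π (σ I).1).comp (shiftMap R p 1 e (ρ (σ I).2))
            (FStar.mk R p (e+1) (d * ((g (σ J).1) ^ p * u (σ J).2)))
          = π (σ I).1 (FStar.mk R p e
              (ρ (σ I).2 (FStar.mk R p 1 ((g (σ J).1) ^ p * (d * u (σ J).2))))) := by
        show π (σ I).1 (FStar.mk R p e (ρ (σ I).2 (FStar.mk R p 1 (d * ((g (σ J).1) ^ p * u (σ J).2))))) = _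
        ring_nf
      rw [hcomp]
      have hmul : (FStar.mk R p 1 ((g (σ J).1) ^ p * (d * u (σ J).2)))
          = ((g (σ J).1) • (FStar.mk R p 1 (d * u (σ J).2)) : FStar R p 1 R) := by
        rw [fstar_smul R p 1, pow_one]
        rfl
      rw [hmul, map_smul]
      have hval : ((g (σ J).1) • (ρ (σ I).2 (FStar.mk R p 1 (d * u (σ J).2))) : R)
          = g (σ J).1 * (if (σ I).2 = (σ J).2 then d else 0) := by
        rw [hB2]; rfl
      have hIJ : (I = J) ↔ ((σ I).1 = (σ J).1 ∧ (σ I).2 = (σ J).2) := by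
        rw [← Prod.ext_iff, Equiv.apply_eq_iff_eq]
      by_cases hkl : (σ I).2 = (σ J).2
      · have : FStar.mk R p e ((g (σ J).1) • (ρ (σ I).2 (FStar.mk R p 1 (d * u (σ J).2))) : R)
            = FStar.mk R p e (d * g (σ J).1) := by
          rw [hval, if_pos hkl, mul_comm]
        rw [this, hA2]
        simp only [hIJ, hkl, and_true]
      · have : FStar.mk R p e ((g (σ J).1) • (ρ (σ I).2 (FStar.mk R p 1 (d * u (σ J).2))) : R)
            = (0 : FStar R p e R) := by
          rw [hval, if_neg hkl, mul_zero]; rfl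
        rw [this, map_zero]
        rw [if_neg (fun h => hkl (hIJ.1 h).2)]
end Main

section Base
variable (R : Type u) [CommRing R] [IsDomain R] (p : ℕ) [Fact p.Prime] [CharP R p]

lemma mkLinearMap_injective :
    Function.Injective (LocalizedModule.mkLinearMap (nonZeroDivisors R) (FStar R p 1 R)) := by
  intro x y hxy
  rw [LocalizedModule.mkLinearMap_apply, LocalizedModule.mkLinearMap_apply,
    LocalizedModule.mk_eq] at hxy
  obtain ⟨c, hc⟩ := hxy
  have hc' : (c : R) ^ p ^ 1 * ((1:R) ^ p ^ 1 * fsOut R p x)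
      = (c : R) ^ p ^ 1 * ((1:R) ^ p ^ 1 * fsOut R p y) := by
    have h1 : ∀ z : FStar R p 1 R, (c • ((1 : nonZeroDivisors R) • z) : FStar R p 1 R)
        = (c : R) ^ p ^ 1 * ((1:R) ^ p ^ 1 * fsOut R p z) := by
      intro z
      rw [Submonoid.smul_def, Submonoid.smul_def, fstar_smul R p 1, fstar_smul R p 1]
      rfl
    rw [← h1 x, ← h1 y, hc]
  have hcne : (c : R) ^ p ^ 1 ≠ 0 :=
    pow_ne_zero _ (nonZeroDivisors.coe_ne_zero c)
  have : fsOut R p x = fsOut R p y := by simpa [hcne] using hc'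
  exact this

lemma base_data (hFF : FFinite R p) :
    ∃ d : R, d ≠ 0 ∧ ∃ (m : ℕ) (u : Fin m → R) (ρ : Fin m → (FStar R p 1 R →ₗ[R] R)),
      (∀ x : R, ∑ l, (ρ l (FStar.mk R p 1 x)) ^ p * u l = d ^ (p - 1) * x) ∧
      (∀ k l, ρ k (FStar.mk R p 1 (d * u l)) = if k = l then d else 0) := by
  classical
  have hp2 : 2 ≤ p := (Fact.out : p.Prime).two_le
  letI : Module.Finite R (FStar R p 1 R) := hFF
  set S := nonZeroDivisors R with hS
  set K := FractionRing R with hK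
  set M := FStar R p 1 R with hM
  set V := LocalizedModule S M with hV
  set ι := LocalizedModule.mkLinearMap S M with hι
  letI : Module.Finite K V := Module.Finite.of_isLocalizedModule S (Rₚ := K) ι
  set n := Module.finrank K V with hn
  set b0 : Module.Basis (Fin n) K V := Module.finBasis K V with hb0
  -- numerators and denominators of the basis vectors
  have hnum : ∀ l : Fin n, ∃ (y : M) (s : S), b0 l = LocalizedModule.mk y s := by
    intro l
    induction b0 l using LocalizedModule.induction_on with
    | h y s => exact ⟨y, s, rfl⟩
  choose y s hys using hnum
  -- rescale the basis so that each vector is `mk (u l) 1`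
  set w : Fin n → Kˣ := fun l => (IsLocalization.map_units K (s l)).unit with hw
  set b : Module.Basis (Fin n) K V := b0.unitsSMul w with hb
  have hbl : ∀ l, b l = LocalizedModule.mk (y l) 1 := by
    intro l
    rw [hb, Module.Basis.unitsSMul_apply]
    have h1 : (w l : K) • b0 l = ((s l : R) • b0 l : V) := by
      rw [hw]
      show ((algebraMap R K) (s l : R)) • b0 l = _
      rw [algebraMap_smul]
    rw [Units.smul_def, h1, hys, LocalizedModule.smul'_mk, ← Submonoid.smul_def,
      LocalizedModule.mk_cancel]
  -- the coordinate maps, restricted to `R`-linear maps `M → K`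
  set ρ' : Fin n → (M →ₗ[R] K) :=
    fun l => ((b.coord l).restrictScalars R).comp ι with hρ'
  have hρ'app : ∀ (l : Fin n) (x : M), ρ' l x = b.repr (ι x) l := by
    intro l x
    rw [hρ']
    rfl
  -- clear denominators
  obtain ⟨k, wgen, hwgen⟩ := Module.Finite.exists_fin (R := R) (M := M)
  have hsur : ∀ (l : Fin n) (i : Fin k), ∃ (r : R) (t : S),
      (ρ' l (wgen i)) * algebraMap R K t = algebraMap R K r := by
    intro l i
    obtain ⟨⟨r, t⟩, h⟩ := IsLocalization.surj S (ρ' l (wgen i))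
    exact ⟨r, t, h⟩
  choose num den hnumden using hsur
  set d₀ : S := ∏ q : Fin n × Fin k, den q.1 q.2 with hd₀
  set T := LinearMap.range (Algebra.linearMap R K) with hT
  have hgen : ∀ (l : Fin n) (i : Fin k), (d₀ : R) • (ρ' l (wgen i)) ∈ T := by
    intro l i
    have hdvd : ((den l i : R)) ∣ (d₀ : R) := by
      rw [hd₀]
      rw [show ((↑(∏ q : Fin n × Fin k, den q.1 q.2) : R))
          = ∏ q : Fin n × Fin k, ((den q.1 q.2 : R)) from
        SubmonoidClass.coe_finset_prod _ _]
      exact Finset.dvd_prod_of_mem _ (Finset.mem_univ (l, i))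
    obtain ⟨c, hc⟩ := hdvd
    rw [hc, mul_comm, mul_smul]
    refine Submodule.smul_mem T c ?_
    have : ((den l i : R)) • (ρ' l (wgen i)) = algebraMap R K (num l i) := by
      rw [Algebra.smul_def, mul_comm]
      exact hnumden l i
    rw [this]
    exact ⟨num l i, rfl⟩
  have hd₀T : ∀ (l : Fin n) (x : M), (((d₀ : R) ^ (p - 1)) • (ρ' l)) x ∈ T := by
    intro l
    have hsub : (⊤ : Submodule R M) ≤ Submodule.comap (((d₀ : R) ^ (p - 1)) • (ρ' l)) T := by
      rw [← hwgen]
      rw [Submodule.span_le]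
      rintro _ ⟨i, rfl⟩
      have hp1 : p - 1 = (p - 2) + 1 := by omega
      show (((d₀ : R) ^ (p - 1)) • (ρ' l)) (wgen i) ∈ T
      rw [LinearMap.smul_apply, hp1, pow_succ, mul_smul]
      exact Submodule.smul_mem T _ (hgen l i)
    exact fun x => hsub (Submodule.mem_top (x := x))
  have hAinj : Function.Injective (Algebra.linearMap R K) := IsFractionRing.injective R K
  set eR : R ≃ₗ[R] T := LinearEquiv.ofInjective (Algebra.linearMap R K) hAinj with heR
  set ρfin : Fin n → (M →ₗ[R] R) := fun l =>
    (eR.symm.toLinearMap).comp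
      ((((d₀ : R) ^ (p - 1)) • (ρ' l)).codRestrict T (hd₀T l)) with hρfin
  have hAval : ∀ (l : Fin n) (x : M),
      algebraMap R K (ρfin l x) = ((d₀ : R) ^ (p - 1)) • (ρ' l x) := by
    intro l x
    have h2 : eR (ρfin l x) = ((((d₀ : R) ^ (p - 1)) • (ρ' l)).codRestrict T (hd₀T l)) x := by
      rw [hρfin]
      exact eR.apply_symm_apply _
    have h3 : (eR (ρfin l x) : K) = algebraMap R K (ρfin l x) := by
      rw [heR]
      rfl
    have h4 := congrArg (Subtype.val) h2
    rw [h3] at h4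
    rw [h4]
    rfl
  have hbl' : ∀ l : Fin n, ι (y l) = b l := by
    intro l
    rw [hbl]
    rfl
  -- assemble the data
  refine ⟨(d₀ : R) ^ p, pow_ne_zero _ (nonZeroDivisors.coe_ne_zero d₀), n,
    fun l => fsOut R p (y l), ρfin, ?_, ?_⟩
  · intro x
    apply mkLinearMap_injective R p
    have e1 : ∀ l : Fin n, ((ρfin l (FStar.mk R p 1 x)) • (y l) : M)
        = FStar.mk R p 1 (ρfin l (FStar.mk R p 1 x) ^ p * fsOut R p (y l)) := by
      intro l
      rw [fstar_smul R p 1, pow_one]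
      rfl
    have e2 : ι (FStar.mk R p 1 (((d₀ : R) ^ p) ^ (p - 1) * x))
        = ((d₀ : R) ^ (p - 1)) • ι (FStar.mk R p 1 x) := by
      have h7 : (((d₀ : R) ^ (p - 1)) • (FStar.mk R p 1 x) : M)
          = FStar.mk R p 1 (((d₀ : R) ^ p) ^ (p - 1) * x) := by
        rw [fstar_smul R p 1, pow_one, ← pow_mul, ← pow_mul, mul_comm p (p-1)]
        rfl
      rw [← h7, ι.map_smul]
    show ι (∑ l, ρfin l (FStar.mk R p 1 x) ^ p * fsOut R p (y l))
        = ι (((d₀ : R) ^ p) ^ (p - 1) * x)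
    calc ι (∑ l, ρfin l (FStar.mk R p 1 x) ^ p * fsOut R p (y l))
        = ∑ l, ι ((ρfin l (FStar.mk R p 1 x)) • (y l)) := by
          exact (map_sum ι (fun l => FStar.mk R p 1 (ρfin l (FStar.mk R p 1 x) ^ p * fsOut R p (y l)))
            Finset.univ).trans (Finset.sum_congr rfl (fun l _ => (congrArg ι (e1 l)).symm))
      _ = ∑ l, algebraMap R K ((d₀ : R) ^ (p - 1))
            • ((b.repr (ι (FStar.mk R p 1 x)) l) • b l) := by
          refine Finset.sum_congr rfl (fun l _ => ?_)
          rw [ι.map_smul, hbl' l, ← algebraMap_smul K (ρfin l (FStar.mk R p 1 x)) (b l),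
            hAval, hρ'app, Algebra.smul_def, mul_smul]
      _ = algebraMap R K ((d₀ : R) ^ (p - 1)) • ι (FStar.mk R p 1 x) := by
          rw [← Finset.smul_sum, b.sum_repr]
      _ = ι (((d₀ : R) ^ p) ^ (p - 1) * x) := by
          rw [algebraMap_smul, ← e2]
          rfl
  · intro k' l
    apply hAinj
    show algebraMap R K (ρfin k' (FStar.mk R p 1 ((d₀ : R) ^ p * fsOut R p (y l))))
        = algebraMap R K (if k' = l then (d₀ : R) ^ p else 0)
    have hdy : (FStar.mk R p 1 ((d₀ : R) ^ p * fsOut R p (y l)) : M) = ((d₀ : R) • (y l) : M) := by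
      rw [fstar_smul R p 1, pow_one]
      rfl
    rw [hdy, hAval, hρ'app, ι.map_smul, hbl' l, ← algebraMap_smul K (d₀ : R) (b l),
      b.repr.map_smul, b.repr_self]
    rw [Finsupp.smul_apply, Finsupp.single_apply, smul_eq_mul, Algebra.smul_def]
    by_cases hkl : k' = l
    · rw [if_pos hkl, if_pos hkl.symm, mul_one, ← map_mul, ← pow_succ]
      congr 2
      omega
    · rw [if_neg hkl, if_neg (fun h => hkl h.symm), mul_zero, mul_zero, map_zero]

end Base

section Bounds
variable (R : Type u) [CommRing R] [IsDomain R] (p : ℕ) [Fact p.Prime] [CharP R p]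

/-- lower bound for splitting numbers from level-`e` data plus a splitting of `d` -/
lemma frk_lower (hFF : FFinite R p) (d : R) {e₀ e : ℕ}
    (φ : FStar R p e₀ R →ₗ[R] R) (hφ : φ (FStar.mk R p e₀ d) = 1)
    (N : ℕ) (g : Fin N → R) (π : Fin N → (FStar R p e R →ₗ[R] R))
    (hA2 : ∀ i j, π i (FStar.mk R p e (d * g j)) = if i = j then d else 0) :
    N ≤ frk R (FStar R p (e₀ + e) R) := by
  letI := fstar_finite R p hFF (e₀ + e)
  set Ψ : FStar R p (e₀ + e) R →ₗ[R] (Fin N → R) :=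
    LinearMap.pi (fun i => φ.comp (shiftMap R p e e₀ (π i))) with hΨ
  have hj : ∀ j, Ψ (FStar.mk R p (e₀ + e) (d * g j)) = Pi.single j (1 : R) := by
    intro j
    funext i
    have h1 : Ψ (FStar.mk R p (e₀ + e) (d * g j)) i
        = φ (FStar.mk R p e₀ (π i (FStar.mk R p e (d * g j)))) := rfl
    rw [h1, hA2]
    by_cases hij : i = j
    · rw [if_pos hij, hφ, hij, Pi.single_eq_same]
    · rw [if_neg hij, Pi.single_eq_of_ne hij]
      show φ 0 = 0
      exact map_zero φ
  refine frk_ge R (FStar R p (e₀ + e) R) N Ψ ?_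
  have hmem : ∀ v : Fin N → R, v ∈ LinearMap.range Ψ := by
    intro v
    rw [← Finset.univ_sum_single v]
    refine Submodule.sum_mem _ (fun j _ => ?_)
    have h2 : Pi.single j (v j) = v j • (Pi.single j (1 : R) : Fin N → R) := by
      rw [← Pi.single_smul' j (v j) (1 : R), smul_eq_mul, mul_one]
    rw [h2]
    exact Submodule.smul_mem _ _ ⟨_, hj j⟩
  intro v
  exact hmem v

/-- upper bound for the generic rank from level-`e` data -/
lemma finrank_upper (d : R) (hd : d ≠ 0) {e : ℕ} (N : ℕ) (g : Fin N → R)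
    (π : Fin N → (FStar R p e R →ₗ[R] R))
    (hA1 : ∀ x : R, ∑ j, (π j (FStar.mk R p e x)) ^ p ^ e * g j = d ^ (p ^ e - 1) * x) :
    Module.finrank (FractionRing R) (LocalizedModule (nonZeroDivisors R) (FStar R p e R)) ≤ N := by
  have hp2 : 2 ≤ p := (Fact.out : p.Prime).two_le
  set S := nonZeroDivisors R with hS
  set K := FractionRing R with hK
  have hdS : d ∈ S := mem_nonZeroDivisors_of_ne_zero hd
  set W := LocalizedModule S (FStar R p e R) with hW
  set ιe := LocalizedModule.mkLinearMap S (FStar R p e R) with hιe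
  set v : Fin N → W := fun j => LocalizedModule.mk (FStar.mk R p e (d * g j)) 1 with hv
  have hdx : ∀ x : R, (d • (FStar.mk R p e x) : FStar R p e R)
      = ∑ j, (π j (FStar.mk R p e x)) • (FStar.mk R p e (d * g j)) := by
    intro x
    have hterm : ∀ j : Fin N, ((π j (FStar.mk R p e x)) • (FStar.mk R p e (d * g j)) : FStar R p e R)
        = FStar.mk R p e (d * ((π j (FStar.mk R p e x)) ^ p ^ e * g j)) := by
      intro j
      rw [fstar_smul R p e]
      show (π j (FStar.mk R p e x)) ^ p ^ e * (d * g j)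
          = d * ((π j (FStar.mk R p e x)) ^ p ^ e * g j)
      ring
    rw [Finset.sum_congr rfl (fun j _ => hterm j)]
    have hsum : (∑ j, FStar.mk R p e (d * ((π j (FStar.mk R p e x)) ^ p ^ e * g j)) : FStar R p e R)
        = FStar.mk R p e (d * (∑ j, (π j (FStar.mk R p e x)) ^ p ^ e * g j)) := by
      rw [Finset.mul_sum]
      rfl
    rw [hsum, hA1, fstar_smul R p e]
    show d ^ p ^ e * x = d * (d ^ (p ^ e - 1) * x)
    rw [← mul_assoc, ← pow_succ']
    congr 2
    have : 1 ≤ p ^ e := Nat.one_le_pow _ _ (by omega)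
    omega
  have hspan : ∀ z : W, z ∈ Submodule.span K (Set.range v) := by
    intro z
    induction z using LocalizedModule.induction_on with
    | h x t =>
      set dt : S := ⟨d, hdS⟩ * t with hdt
      have hsm : ((dt : R)) • (LocalizedModule.mk x t : W)
          = ∑ j, (π j x) • v j := by
        rw [LocalizedModule.smul'_mk]
        have h3 : ((dt : R) • x : FStar R p e R) = ((t : R) • (d • x) : FStar R p e R) := by
          rw [← mul_smul, hdt]
          norm_num
          rw [mul_comm]
        rw [h3, ← Submonoid.smul_def, LocalizedModule.mk_cancel]
        have h4 : (LocalizedModule.mk (d • x) 1 : W) = ιe (d • x) := rfl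
        rw [h4, show (d • x : FStar R p e R) = d • (FStar.mk R p e (fsOut R p x)) from rfl,
          hdx, map_sum]
        refine Finset.sum_congr rfl (fun j _ => ?_)
        rw [ιe.map_smul]
        rfl
      have hz : (algebraMap R K (dt : R)) • (LocalizedModule.mk x t : W)
          ∈ Submodule.span K (Set.range v) := by
        rw [algebraMap_smul, hsm]
        refine Submodule.sum_mem _ (fun j _ => ?_)
        rw [← algebraMap_smul K (π j x) (v j)]
        exact Submodule.smul_mem _ _ (Submodule.subset_span ⟨j, rfl⟩)
      have hc0 : algebraMap R K (dt : R) ≠ 0 := by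
        have hne : (dt : R) ≠ 0 := nonZeroDivisors.coe_ne_zero dt
        exact (map_ne_zero_iff _ (IsFractionRing.injective R K)).2 hne
      have hmem := Submodule.smul_mem (Submodule.span K (Set.range v))
        (algebraMap R K (dt : R))⁻¹ hz
      rwa [inv_smul_smul₀ hc0] at hmem
  have htop : Submodule.span K (Set.range v) = ⊤ :=
    eq_top_iff.2 (fun z _ => hspan z)
  have h8 : Module.rank K ↥(Submodule.span K (Set.range v)) = Module.rank K W := by
    rw [htop]
    exact rank_top K W
  have h9 : (Cardinal.mk ↥(Set.range v)) ≤ (N : Cardinal) := by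
    simpa using Cardinal.mk_range_le_lift (f := v)
  have hrank : Module.rank K W ≤ N := by
    rw [← h8]
    exact le_trans (rank_span_le (R := K) (Set.range v)) h9
  exact Module.finrank_le_of_rank_le hrank

end Bounds

section Pos
variable (R : Type u) [CommRing R] [IsDomain R] (p : ℕ) [Fact p.Prime] [CharP R p]

lemma frk_one_le (hFF : FFinite R p) {E : ℕ} (ψ : FStar R p E R →ₗ[R] R)
    (hψ : ψ (FStar.mk R p E 1) = 1) : 1 ≤ frk R (FStar R p E R) := by
  letI := fstar_finite R p hFF E
  refine frk_ge R (FStar R p E R) 1 (LinearMap.pi (fun _ : Fin 1 => ψ)) ?_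
  intro v
  have hsurj : ∀ r : R, ∃ x : FStar R p E R, ψ x = r := by
    intro r
    refine ⟨(r • (FStar.mk R p E 1) : FStar R p E R), ?_⟩
    rw [map_smul, hψ, smul_eq_mul, mul_one]
  obtain ⟨x, hx⟩ := hsurj (v 0)
  refine ⟨x, funext fun i => ?_⟩
  have h1 : (LinearMap.pi (fun _ : Fin 1 => ψ)) x i = ψ x := rfl
  rw [h1, hx]
  exact congrArg v (Subsingleton.elim 0 i)

end Pos
/-- over a strongly F-regular F-finite domain, the splitting numbers grow at
least like a positive multiple of the generic rank of `F^e_* R`. -/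
theorem strongly_F_regular_splitting_numbers_bound
    (R : Type u) [CommRing R] [IsDomain R] [IsNoetherianRing R]
    (p : ℕ) [Fact p.Prime] [CharP R p] (hFF : FFinite R p)
    (hSF : StronglyFRegular R p) :
    ∃ ε : ℝ, 0 < ε ∧ ∀ e : ℕ, 1 ≤ e →
      ε * (Module.finrank (FractionRing R)
          (LocalizedModule (nonZeroDivisors R) (FStar R p e R)) : ℝ) ≤
        (frk R (FStar R p e R) : ℝ) := by
  have hp2 : 2 ≤ p := (Fact.out : p.Prime).two_le
  obtain ⟨d, hd, m, uu, ρ, hB1, hB2⟩ := base_data R p hFF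
  obtain ⟨e₀, he₀, φ, hφ⟩ := hSF d hd
  have hm : 1 ≤ m := by
    by_contra hcon
    have hm0 : m = 0 := by omega
    subst hm0
    have h1 := hB1 1
    rw [Finset.univ_eq_empty, Finset.sum_empty, mul_one] at h1
    exact hd ((pow_eq_zero_iff (by omega : p - 1 ≠ 0)).1 h1.symm)
  set ε : ℝ := ((m : ℝ) ^ e₀)⁻¹ with hεdef
  have hmR : (1 : ℝ) ≤ (m : ℝ) := by exact_mod_cast hm
  have hpow : ∀ a : ℕ, (0:ℝ) < (m : ℝ) ^ a := fun a => pow_pos (by linarith) a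
  have hε : 0 < ε := inv_pos.2 (hpow e₀)
  refine ⟨ε, hε, ?_⟩
  intro E hE
  obtain ⟨g, π, hA1, hA2⟩ := key_induction R p d m uu ρ hB1 hB2 E
  have hupper : (Module.finrank (FractionRing R)
      (LocalizedModule (nonZeroDivisors R) (FStar R p E R)) : ℝ) ≤ ((m : ℝ)) ^ E := by
    have := finrank_upper R p d hd (m ^ E) g π hA1
    push_cast
    exact_mod_cast this
  by_cases hEe : E ≤ e₀
  · obtain ⟨e₁, he₁, φ₁, hφ₁⟩ := hSF 1 one_ne_zero
    obtain ⟨ψ, hψ⟩ := split_all R p he₁ φ₁ hφ₁ E hE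
    have h1le : (1 : ℝ) ≤ (frk R (FStar R p E R) : ℝ) := by
      exact_mod_cast frk_one_le R p hFF ψ hψ
    have hchain : ε * (Module.finrank (FractionRing R)
        (LocalizedModule (nonZeroDivisors R) (FStar R p E R)) : ℝ) ≤ ε * (m : ℝ) ^ E :=
      mul_le_mul_of_nonneg_left hupper hε.le
    have hmono : ((m : ℝ)) ^ E ≤ ((m : ℝ)) ^ e₀ := pow_le_pow_right₀ hmR hEe
    have : ε * (m : ℝ) ^ E ≤ 1 := by
      rw [hεdef]
      rw [inv_mul_le_iff₀ (hpow e₀), mul_one]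
      exact hmono
    linarith
  · obtain ⟨g', π', hA1', hA2'⟩ := key_induction R p d m uu ρ hB1 hB2 (E - e₀)
    have hlow : m ^ (E - e₀) ≤ frk R (FStar R p (e₀ + (E - e₀)) R) :=
      frk_lower R p hFF d φ hφ (m ^ (E - e₀)) g' π' hA2'
    rw [show e₀ + (E - e₀) = E from by omega] at hlow
    have hlowR : ((m : ℝ)) ^ (E - e₀) ≤ (frk R (FStar R p E R) : ℝ) := by
      exact_mod_cast hlow
    have hsplitpow : ((m : ℝ)) ^ E = ((m : ℝ)) ^ (E - e₀) * ((m : ℝ)) ^ e₀ := by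
      rw [← pow_add]
      congr 1
      omega
    have heq : ε * (m : ℝ) ^ E = ((m : ℝ)) ^ (E - e₀) := by
      rw [hεdef, hsplitpow]
      field_simp
    have hchain : ε * (Module.finrank (FractionRing R)
        (LocalizedModule (nonZeroDivisors R) (FStar R p E R)) : ℝ) ≤ ε * (m : ℝ) ^ E :=
      mul_le_mul_of_nonneg_left hupper hε.le
    linarith
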